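/- For any partitions μ and ν, one has the identity E_{μ,ν} = qt·B_μ + B_ν^* - (q-1)(t-1)·B_μ·B_ν^*, where E_{μ,ν} = Σ_{□∈μ} q^{-a_ν(□)} t^{l_μ(□)+1} + Σ_{□∈ν} q^{a_μ(□)+1} t^{-l_ν(□)}. -/

import Mathlib

open Finset

/-- A partition: weakly decreasing sequence of naturals, with `len` nonzero parts
(0-based indexing: `part 0 = μ₁`). -/
structure YDPartition where
  part : ℕ → ℕ
  len : ℕ
  antitone : ∀ ⦃i j : ℕ⦄, i ≤ j → part j ≤ part i
  pos_iff : ∀ i, i < len ↔ 0 < part i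

/-- Height of the (0-based) column `c` of the Young diagram. -/
def colHeight (p : ℕ → ℕ) (l c : ℕ) : ℕ :=
  ((Finset.range l).filter (fun r => c < p r)).card

/-- Arm length (possibly negative) of the cell in (0-based) row `r`, column `c`. -/
def armZ (p : ℕ → ℕ) (r c : ℕ) : ℤ := (p r : ℤ) - 1 - c

/-- Leg length (possibly negative) of the cell in (0-based) row `r`, column `c`. -/
def legZ (p : ℕ → ℕ) (l r c : ℕ) : ℤ :=
  (colHeight p l c : ℤ) - 1 - r

/-- `E_{μ,ν} = Σ_{□∈μ} q^{-a_ν(□)} t^{l_μ(□)+1} + Σ_{□∈ν} q^{a_μ(□)+1} t^{-l_ν(□)}`. -/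
noncomputable def Efun {K : Type*} [Field K] (q t : K)
    (pμ : ℕ → ℕ) (lμ : ℕ) (pν : ℕ → ℕ) (lν : ℕ) : K :=
  (∑ r ∈ range lμ, ∑ c ∈ range (pμ r),
      q ^ (-(armZ pν r c)) * t ^ (legZ pμ lμ r c + 1)) +
  ∑ r ∈ range lν, ∑ c ∈ range (pν r),
      q ^ (armZ pμ r c + 1) * t ^ (-(legZ pν lν r c))

/-- `B_μ = Σ_{□∈μ} q^{c(□)} t^{r(□)}`. -/
noncomputable def Bfun {K : Type*} [Field K] (q t : K) (p : ℕ → ℕ) (l : ℕ) : K :=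
  ∑ r ∈ range l, ∑ c ∈ range (p r), q ^ (c : ℤ) * t ^ (r : ℤ)

section Aux

variable {K : Type*} [Field K] {p : ℕ → ℕ} {l : ℕ}

lemma aux_geom_zpow (x : K) (n : ℕ) :
    (x - 1) * ∑ i ∈ range n, x ^ (i : ℤ) = x ^ (n : ℤ) - 1 := by
  rw [mul_comm]; simpa [zpow_natCast] using geom_sum_mul x n

lemma aux_geom_zpow_Ico (x : K) {a b : ℕ} (hab : a ≤ b) :
    (x - 1) * ∑ i ∈ Ico a b, x ^ (i : ℤ) = x ^ (b : ℤ) - x ^ (a : ℤ) := by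
  rw [Finset.sum_Ico_eq_sub _ hab, mul_sub, aux_geom_zpow, aux_geom_zpow]; ring

lemma aux_geom_inv {q : K} (hq : q ≠ 0) (k : ℕ) :
    (1 - q) * ∑ γ ∈ range k, q ^ (-(γ : ℤ)) = q ^ (1 - (k : ℤ)) - q := by
  induction k with
  | zero => simp
  | succ k ih =>
    rw [Finset.sum_range_succ, mul_add, ih]
    push_cast
    rw [show (1 - (k : ℤ)) = -(k:ℤ) + 1 by ring, zpow_add_one₀ hq,
      show (1 - ((k:ℤ)+1)) = -(k:ℤ) by ring]
    ring

lemma aux_tele {t : K} (ht : t ≠ 0) (a : ℕ → K) (h : ℕ) :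
    ∑ ρ ∈ range h, a ρ * t ^ ((ρ:ℤ) + 1 - h) =
      ∑ ρ ∈ range h, a ρ +
        ∑ ρ ∈ range h, ∑ r ∈ range ρ, a r * (t ^ ((r:ℤ) - ρ) - t ^ ((r:ℤ) + 1 - ρ)) := by
  induction h with
  | zero => simp
  | succ h ih =>
    push_cast
    rw [Finset.sum_range_succ, Finset.sum_range_succ (f := fun ρ => a ρ),
      Finset.sum_range_succ
        (f := fun ρ => ∑ r ∈ range ρ, a r * (t ^ ((r:ℤ) - ρ) - t ^ ((r:ℤ) + 1 - ρ)))]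
    have e1 : ∀ ρ : ℕ, t ^ ((ρ:ℤ) + 1 - ((h:ℤ)+1)) = t ^ ((ρ:ℤ) + 1 - (h:ℤ)) * t⁻¹ := by
      intro ρ
      rw [show ((ρ:ℤ) + 1 - ((h:ℤ)+1)) = ((ρ:ℤ) + 1 - (h:ℤ)) - 1 by ring, zpow_sub_one₀ ht]
    have e2 : ∀ r : ℕ, t ^ ((r:ℤ) - (h:ℤ)) = t ^ ((r:ℤ) + 1 - (h:ℤ)) * t⁻¹ := by
      intro r
      rw [show ((r:ℤ) - (h:ℤ)) = ((r:ℤ) + 1 - (h:ℤ)) - 1 by ring, zpow_sub_one₀ ht]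
    simp only [e1, e2]
    rw [show ((h:ℤ) + 1 - (h:ℤ)) = 1 by ring, zpow_one]
    have f1 : ∑ ρ ∈ range h, a ρ * (t ^ ((ρ:ℤ) + 1 - (h:ℤ)) * t⁻¹) =
        (∑ ρ ∈ range h, a ρ * t ^ ((ρ:ℤ) + 1 - (h:ℤ))) * t⁻¹ := by
      rw [Finset.sum_mul]; exact Finset.sum_congr rfl fun _ _ => by ring
    have f2 : ∑ r ∈ range h,
        a r * (t ^ ((r:ℤ) + 1 - (h:ℤ)) * t⁻¹ - t ^ ((r:ℤ) + 1 - (h:ℤ))) =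
        (∑ r ∈ range h, a r * t ^ ((r:ℤ) + 1 - (h:ℤ))) * t⁻¹ -
          ∑ r ∈ range h, a r * t ^ ((r:ℤ) + 1 - (h:ℤ)) := by
      rw [Finset.sum_mul, ← Finset.sum_sub_distrib]
      exact Finset.sum_congr rfl fun _ _ => by ring
    rw [f1, f2]
    linear_combination ih + a h * mul_inv_cancel₀ ht

lemma aux_colHeight_lt_iff (hp : ∀ ⦃i j : ℕ⦄, i ≤ j → p j ≤ p i)
    (hl : ∀ i, i < l ↔ 0 < p i) (c r : ℕ) :
    r < colHeight p l c ↔ c < p r := by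
  unfold colHeight
  constructor
  · intro h
    by_contra hc
    push_neg at hc
    have hsub : (range l).filter (fun s => c < p s) ⊆ range r := by
      intro s hs
      simp only [mem_filter, mem_range] at hs ⊢
      by_contra hsr
      push_neg at hsr
      exact absurd (lt_of_lt_of_le hs.2 (hp hsr)) (by omega)
    have := Finset.card_le_card hsub
    simp only [Finset.card_range] at this
    omega
  · intro h
    have hsub : range (r+1) ⊆ (range l).filter (fun s => c < p s) := by
      intro s hs
      simp only [mem_range] at hs
      have hps : c < p s := lt_of_lt_of_le h (hp (by omega))
      simp only [mem_filter, mem_range]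
      exact ⟨(hl s).mpr (by omega), hps⟩
    have := Finset.card_le_card hsub
    simp only [Finset.card_range] at this
    omega

lemma aux_filter_colHeight (hp : ∀ ⦃i j : ℕ⦄, i ≤ j → p j ≤ p i)
    (hl : ∀ i, i < l ↔ 0 < p i) (c : ℕ) :
    (range l).filter (fun r => c < p r) = range (colHeight p l c) := by
  ext r
  simp only [mem_filter, mem_range, aux_colHeight_lt_iff hp hl]
  constructor
  · exact fun h => h.2
  · intro h
    exact ⟨(hl r).mpr (by omega), h⟩

lemma aux_sum_swap_cells (hp : ∀ ⦃i j : ℕ⦄, i ≤ j → p j ≤ p i)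
    (hl : ∀ i, i < l ↔ 0 < p i) (f : ℕ → ℕ → K) :
    ∑ r ∈ range l, ∑ c ∈ range (p r), f r c =
      ∑ c ∈ range (p 0), ∑ r ∈ range (colHeight p l c), f r c := by
  have h1 : ∀ r ∈ range l, ∑ c ∈ range (p r), f r c =
      ∑ c ∈ range (p 0), if c < p r then f r c else 0 := by
    intro r _
    have hfil : (range (p 0)).filter (fun c => c < p r) = range (p r) := by
      ext c
      have := hp (Nat.zero_le r)
      simp only [mem_filter, mem_range]
      omega
    rw [← hfil, Finset.sum_filter]
  rw [Finset.sum_congr rfl h1, Finset.sum_comm]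
  refine Finset.sum_congr rfl fun c _ => ?_
  rw [← Finset.sum_filter, aux_filter_colHeight hp hl]

noncomputable def Ffun (q t : K) (p : ℕ → ℕ) (l ρ : ℕ) : K :=
  (1-q) * (∑ c ∈ range (p ρ), q^(c:ℤ) * t^((colHeight p l c : ℤ)))
  + q^((p ρ : ℤ)) * t^((ρ:ℤ))
  + (1-t) * ∑ r ∈ range ρ, q^((p r:ℤ)) * t^((r:ℤ))

lemma Ffun_succ {q t : K} (hq : q ≠ 0) (ht : t ≠ 0)
    (hp : ∀ ⦃i j : ℕ⦄, i ≤ j → p j ≤ p i) (hl : ∀ i, i < l ↔ 0 < p i) (ρ : ℕ) :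
    Ffun q t p l (ρ+1) = Ffun q t p l ρ := by
  have hle : p (ρ+1) ≤ p ρ := hp (Nat.le_succ ρ)
  have hsplit : ∑ c ∈ range (p ρ), q^(c:ℤ) * t^((colHeight p l c : ℤ)) =
      (∑ c ∈ range (p (ρ+1)), q^(c:ℤ) * t^((colHeight p l c : ℤ))) +
        ∑ c ∈ Ico (p (ρ+1)) (p ρ), q^(c:ℤ) * t^((colHeight p l c : ℤ)) := by
    rw [range_eq_Ico, ← Finset.sum_Ico_consecutive _ (Nat.zero_le _) hle, ← range_eq_Ico]
  have hcol : ∀ c ∈ Ico (p (ρ+1)) (p ρ), colHeight p l c = ρ + 1 := by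
    intro c hc
    simp only [mem_Ico] at hc
    have h1 : ρ < colHeight p l c := (aux_colHeight_lt_iff hp hl c ρ).mpr hc.2
    have h2 : ¬ (ρ + 1 < colHeight p l c) := by
      rw [aux_colHeight_lt_iff hp hl]; omega
    omega
  have hIco : ∑ c ∈ Ico (p (ρ+1)) (p ρ), q^(c:ℤ) * t^((colHeight p l c : ℤ)) =
      (∑ c ∈ Ico (p (ρ+1)) (p ρ), q^(c:ℤ)) * (t^((ρ:ℤ)) * t) := by
    rw [Finset.sum_mul]
    refine Finset.sum_congr rfl fun c hc => ?_
    rw [hcol c hc]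
    rw [show (((ρ:ℕ)+1 : ℕ) : ℤ) = (ρ:ℤ) + 1 by push_cast; ring, zpow_add_one₀ ht]
  have hgeo := aux_geom_zpow_Ico q hle
  unfold Ffun
  rw [hsplit, hIco, Finset.sum_range_succ,
    show (((ρ:ℕ)+1 : ℕ) : ℤ) = (ρ:ℤ) + 1 by push_cast; ring, zpow_add_one₀ ht]
  linear_combination (t^((ρ:ℤ)) * t) * hgeo

lemma Ffun_eval {q t : K} (ht : t ≠ 0)
    (hl : ∀ i, i < l ↔ 0 < p i)
    {N : ℕ} (hlN : l ≤ N) :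
    Ffun q t p l N =
      1 - (q-1)*(t-1) * ∑ r ∈ range l, ∑ c ∈ range (p r), q^(c:ℤ) * t^(r:ℤ) := by
  have hpN : p N = 0 := by
    have := (hl N).mpr
    by_contra h
    exact absurd (this (by omega)) (by omega)
  have hp0 : ∀ r ∈ Ico l N, q^((p r:ℤ)) * t^((r:ℤ)) = t^((r:ℤ)) := by
    intro r hr
    simp only [mem_Ico] at hr
    have : p r = 0 := by
      have := (hl r).mpr
      by_contra h
      exact absurd (this (by omega)) (by omega)
    rw [this]
    norm_num
  have hsplit : ∑ r ∈ range N, q^((p r:ℤ)) * t^((r:ℤ)) =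
      (∑ r ∈ range l, q^((p r:ℤ)) * t^((r:ℤ))) + ∑ r ∈ Ico l N, t^((r:ℤ)) := by
    rw [range_eq_Ico, ← Finset.sum_Ico_consecutive _ (Nat.zero_le l) hlN, ← range_eq_Ico]
    congr 1
    exact Finset.sum_congr rfl hp0
  have hgt : (t-1) * ∑ r ∈ Ico l N, t^(r:ℤ) = t^((N:ℤ)) - t^((l:ℤ)) := aux_geom_zpow_Ico t hlN
  have hgl : (t-1) * ∑ r ∈ range l, t^(r:ℤ) = t^((l:ℤ)) - 1 := aux_geom_zpow t l
  have hB : (q-1) * ∑ r ∈ range l, ∑ c ∈ range (p r), q^(c:ℤ) * t^(r:ℤ) =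
      (∑ r ∈ range l, q^((p r:ℤ)) * t^(r:ℤ)) - ∑ r ∈ range l, t^(r:ℤ) := by
    rw [Finset.mul_sum, ← Finset.sum_sub_distrib]
    refine Finset.sum_congr rfl fun r _ => ?_
    rw [← Finset.sum_mul, ← mul_assoc, aux_geom_zpow]
    ring
  unfold Ffun
  rw [hpN, hsplit]
  simp only [Finset.range_zero, Finset.sum_empty, mul_zero, zero_add, Nat.cast_zero,
    zpow_zero, one_mul]
  linear_combination (t-1) * hB - hgt - hgl

lemma Ffun_const {q t : K} (hq : q ≠ 0) (ht : t ≠ 0)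
    (hp : ∀ ⦃i j : ℕ⦄, i ≤ j → p j ≤ p i) (hl : ∀ i, i < l ↔ 0 < p i) (ρ : ℕ) :
    Ffun q t p l ρ =
      1 - (q-1)*(t-1) * ∑ r ∈ range l, ∑ c ∈ range (p r), q^(c:ℤ) * t^(r:ℤ) := by
  have hup : ∀ k, Ffun q t p l (ρ + k) = Ffun q t p l ρ := by
    intro k
    induction k with
    | zero => rfl
    | succ k ih => rw [← Nat.add_assoc, Ffun_succ hq ht hp hl, ih]
  rw [← hup l]
  exact Ffun_eval ht hl (Nat.le_add_left l ρ)

end Aux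

section Aux2
variable {K : Type*} [Field K] {p : ℕ → ℕ} {l : ℕ}

lemma aux_qtB {q t : K} (hq : q ≠ 0) (ht : t ≠ 0)
    (hp : ∀ ⦃i j : ℕ⦄, i ≤ j → p j ≤ p i) (hl : ∀ i, i < l ↔ 0 < p i) :
    q * t * ∑ r ∈ range l, ∑ c ∈ range (p r), q^(c:ℤ) * t^(r:ℤ) =
      ∑ r ∈ range l, ∑ c ∈ range (p r), q^((c:ℤ)+1) * t^((colHeight p l c : ℤ) - r) := by
  rw [aux_sum_swap_cells hp hl (fun r c => q^(c:ℤ)*t^(r:ℤ)),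
      aux_sum_swap_cells hp hl (fun r c => q^((c:ℤ)+1) * t^((colHeight p l c : ℤ) - r))]
  rw [Finset.mul_sum]
  refine Finset.sum_congr rfl fun c _ => ?_
  have hrefl := Finset.sum_range_reflect
    (fun j => q^((c:ℤ)+1) * t^((j:ℤ)+1)) (colHeight p l c)
  calc q*t*∑ r ∈ range (colHeight p l c), q^(c:ℤ)*t^(r:ℤ)
      = ∑ j ∈ range (colHeight p l c), q^((c:ℤ)+1) * t^((j:ℤ)+1) := by
        rw [Finset.mul_sum]
        refine Finset.sum_congr rfl fun j _ => ?_
        rw [zpow_add_one₀ hq, zpow_add_one₀ ht]; ring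
    _ = ∑ j ∈ range (colHeight p l c),
          q^((c:ℤ)+1) * t^(((colHeight p l c - 1 - j : ℕ):ℤ)+1) := hrefl.symm
    _ = ∑ j ∈ range (colHeight p l c),
          q^((c:ℤ)+1) * t^((colHeight p l c : ℤ) - j) := by
        refine Finset.sum_congr rfl fun j hj => ?_
        simp only [mem_range] at hj
        rw [show ((colHeight p l c - 1 - j : ℕ):ℤ)+1 = (colHeight p l c : ℤ) - j by omega]
end Aux2

/-- `E_{μ,ν} = qt·B_μ + B_ν^* - (q-1)(t-1)·B_μ·B_ν^*`. -/
theorem Efun_eq {K : Type*} [Field K] (q t : K) (hq : q ≠ 0) (ht : t ≠ 0)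
    (μ ν : YDPartition) :
    Efun q t μ.part μ.len ν.part ν.len =
      q * t * Bfun q t μ.part μ.len + Bfun q⁻¹ t⁻¹ ν.part ν.len -
        (q - 1) * (t - 1) * Bfun q t μ.part μ.len * Bfun q⁻¹ t⁻¹ ν.part ν.len := by
  have hmp := μ.antitone
  have hml := μ.pos_iff
  have hnp := ν.antitone
  have hnl := ν.pos_iff
  have key : ∀ ρ : ℕ, Ffun q t μ.part μ.len ρ =
      1 - (q-1)*(t-1)*Bfun q t μ.part μ.len := fun ρ => by
    unfold Bfun; exact Ffun_const hq ht hmp hml ρ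
  have hBstar : Bfun q⁻¹ t⁻¹ ν.part ν.len =
      ∑ ρ ∈ range ν.len, ∑ γ ∈ range (ν.part ρ), q^(-(γ:ℤ)) * t^(-(ρ:ℤ)) := by
    unfold Bfun
    refine Finset.sum_congr rfl fun ρ _ => Finset.sum_congr rfl fun γ _ => ?_
    rw [inv_zpow, inv_zpow, ← zpow_neg, ← zpow_neg]
  have hz : ∀ r, μ.len ≤ r → μ.part r = 0 := fun r hr => by
    have := (hml r).mpr; by_contra h; exact absurd (this (by omega)) (by omega)
  have hzn : ∀ r, ν.len ≤ r → ν.part r = 0 := fun r hr => by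
    have := (hnl r).mpr; by_contra h; exact absurd (this (by omega)) (by omega)
  have hII : (∑ r ∈ range ν.len, ∑ c ∈ range (ν.part r),
        q ^ (armZ μ.part r c + 1) * t ^ (-(legZ ν.part ν.len r c))) =
      ∑ ρ ∈ range ν.len, ∑ γ ∈ range (ν.part ρ),
        q^(-(γ:ℤ)) * t^(-(ρ:ℤ)) *
          (q^((μ.part ρ:ℤ)) * t^((ρ:ℤ)) +
            (1-t) * ∑ r ∈ range ρ, q^((μ.part r:ℤ)) * t^((r:ℤ))) := by
    rw [aux_sum_swap_cells hnp hnl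
        (fun r c => q ^ (armZ μ.part r c + 1) * t ^ (-(legZ ν.part ν.len r c))),
      aux_sum_swap_cells hnp hnl
        (fun ρ γ => q^(-(γ:ℤ)) * t^(-(ρ:ℤ)) *
          (q^((μ.part ρ:ℤ)) * t^((ρ:ℤ)) +
            (1-t) * ∑ r ∈ range ρ, q^((μ.part r:ℤ)) * t^((r:ℤ))))]
    refine Finset.sum_congr rfl fun γ _ => ?_
    have htele := aux_tele ht (fun r => q^((μ.part r:ℤ) - (γ:ℤ))) (colHeight ν.part ν.len γ)
    calc ∑ ρ ∈ range (colHeight ν.part ν.len γ),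
          q ^ (armZ μ.part ρ γ + 1) * t ^ (-(legZ ν.part ν.len ρ γ))
        = ∑ ρ ∈ range (colHeight ν.part ν.len γ),
            q^((μ.part ρ:ℤ) - (γ:ℤ)) * t^((ρ:ℤ) + 1 - (colHeight ν.part ν.len γ:ℤ)) := by
          refine Finset.sum_congr rfl fun ρ _ => ?_
          rw [show armZ μ.part ρ γ + 1 = (μ.part ρ:ℤ) - (γ:ℤ) by unfold armZ; ring,
            show -(legZ ν.part ν.len ρ γ) = (ρ:ℤ) + 1 - (colHeight ν.part ν.len γ:ℤ) by
              unfold legZ; ring]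
      _ = ∑ ρ ∈ range (colHeight ν.part ν.len γ), q^((μ.part ρ:ℤ) - (γ:ℤ)) +
            ∑ ρ ∈ range (colHeight ν.part ν.len γ), ∑ r ∈ range ρ,
              q^((μ.part r:ℤ) - (γ:ℤ)) * (t^((r:ℤ) - ρ) - t^((r:ℤ) + 1 - ρ)) := htele
      _ = ∑ ρ ∈ range (colHeight ν.part ν.len γ),
            (q^((μ.part ρ:ℤ) - (γ:ℤ)) + ∑ r ∈ range ρ,
              q^((μ.part r:ℤ) - (γ:ℤ)) * (t^((r:ℤ) - ρ) - t^((r:ℤ) + 1 - ρ))) := by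
          rw [← Finset.sum_add_distrib]
      _ = ∑ ρ ∈ range (colHeight ν.part ν.len γ),
            q^(-(γ:ℤ)) * t^(-(ρ:ℤ)) *
              (q^((μ.part ρ:ℤ)) * t^((ρ:ℤ)) +
                (1-t) * ∑ r ∈ range ρ, q^((μ.part r:ℤ)) * t^((r:ℤ))) := by
          refine Finset.sum_congr rfl fun ρ _ => ?_
          have hin : ∀ r : ℕ, q^((μ.part r:ℤ) - (γ:ℤ)) *
              (t^((r:ℤ) - (ρ:ℤ)) - t^((r:ℤ) + 1 - (ρ:ℤ))) =
              (q^(-(γ:ℤ)) * t^(-(ρ:ℤ)) * (1-t)) * (q^((μ.part r:ℤ)) * t^((r:ℤ))) := by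
            intro r
            rw [zpow_sub₀ hq, zpow_sub₀ ht, zpow_sub₀ ht, zpow_add_one₀ ht,
              zpow_neg, zpow_neg]
            field_simp
          rw [Finset.sum_congr rfl (fun r _ => hin r), ← Finset.mul_sum]
          have h1 : q^((μ.part ρ:ℤ) - (γ:ℤ)) = q^((μ.part ρ:ℤ)) * q^(-(γ:ℤ)) := by
            rw [← zpow_add₀ hq]; ring_nf
          have h2 : t^(-(ρ:ℤ)) * t^((ρ:ℤ)) = 1 := by
            rw [← zpow_add₀ ht]; norm_num
          linear_combination h1 - (q^((μ.part ρ:ℤ)) * q^(-(γ:ℤ))) * h2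
  have hI : (∑ r ∈ range μ.len, ∑ c ∈ range (μ.part r),
        q ^ (-(armZ ν.part r c)) * t ^ (legZ μ.part μ.len r c + 1)) =
      q * t * Bfun q t μ.part μ.len +
        ∑ ρ ∈ range ν.len, ∑ γ ∈ range (ν.part ρ),
          q^(-(γ:ℤ)) * t^(-(ρ:ℤ)) *
            ((1-q) * ∑ c ∈ range (μ.part ρ), q^(c:ℤ) * t^((colHeight μ.part μ.len c:ℤ))) := by
    have hA1 : ∀ ρ : ℕ, (∑ γ ∈ range (ν.part ρ),
          q^(-(γ:ℤ)) * t^(-(ρ:ℤ)) *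
            ((1-q) * ∑ c ∈ range (μ.part ρ), q^(c:ℤ) * t^((colHeight μ.part μ.len c:ℤ)))) =
        ∑ c ∈ range (μ.part ρ),
          (q^((c:ℤ)+1-(ν.part ρ:ℤ)) - q^((c:ℤ)+1)) * t^((colHeight μ.part μ.len c:ℤ) - ρ) := by
      intro ρ
      have hg := aux_geom_inv hq (ν.part ρ)
      have step1 : (∑ γ ∈ range (ν.part ρ),
          q^(-(γ:ℤ)) * t^(-(ρ:ℤ)) *
            ((1-q) * ∑ c ∈ range (μ.part ρ), q^(c:ℤ) * t^((colHeight μ.part μ.len c:ℤ)))) =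
          (∑ γ ∈ range (ν.part ρ), q^(-(γ:ℤ))) *
            (t^(-(ρ:ℤ)) * ((1-q) * ∑ c ∈ range (μ.part ρ),
              q^(c:ℤ) * t^((colHeight μ.part μ.len c:ℤ)))) := by
        rw [Finset.sum_mul]
        exact Finset.sum_congr rfl fun γ _ => by ring
      have step2 : (∑ c ∈ range (μ.part ρ),
          (q^((c:ℤ)+1-(ν.part ρ:ℤ)) - q^((c:ℤ)+1)) * t^((colHeight μ.part μ.len c:ℤ) - ρ)) =
          ((q^(1-(ν.part ρ:ℤ)) - q) *
            (∑ c ∈ range (μ.part ρ), q^(c:ℤ) * t^((colHeight μ.part μ.len c:ℤ)))) * t^(-(ρ:ℤ)) := by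
        rw [Finset.mul_sum, Finset.sum_mul]
        refine Finset.sum_congr rfl fun c _ => ?_
        rw [show ((c:ℤ)+1-(ν.part ρ:ℤ)) = (1-(ν.part ρ:ℤ)) + (c:ℤ) by ring, zpow_add₀ hq,
          zpow_add_one₀ hq,
          show ((colHeight μ.part μ.len c:ℤ) - (ρ:ℤ)) =
            (colHeight μ.part μ.len c:ℤ) + (-(ρ:ℤ)) by ring, zpow_add₀ ht]
        ring
      rw [step1, step2]
      linear_combination ((∑ c ∈ range (μ.part ρ),
        q^(c:ℤ) * t^((colHeight μ.part μ.len c:ℤ))) * t^(-(ρ:ℤ))) * hg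
    have e1 : ∀ (f : ℕ → ℕ → K), (∑ r ∈ range μ.len, ∑ c ∈ range (μ.part r), f r c) =
        ∑ r ∈ range (μ.len + ν.len), ∑ c ∈ range (μ.part r), f r c := by
      intro f
      apply Finset.sum_subset (Finset.range_subset_range.mpr (by omega))
      intro r _ hr
      simp only [mem_range] at hr
      rw [hz r (by omega)]
      simp
    have e2 : (∑ ρ ∈ range ν.len, ∑ c ∈ range (μ.part ρ),
          (q^((c:ℤ)+1-(ν.part ρ:ℤ)) - q^((c:ℤ)+1)) * t^((colHeight μ.part μ.len c:ℤ) - ρ)) =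
        ∑ ρ ∈ range (μ.len + ν.len), ∑ c ∈ range (μ.part ρ),
          (q^((c:ℤ)+1-(ν.part ρ:ℤ)) - q^((c:ℤ)+1)) * t^((colHeight μ.part μ.len c:ℤ) - ρ) := by
      apply Finset.sum_subset (Finset.range_subset_range.mpr (by omega))
      intro ρ _ hρ
      simp only [mem_range] at hρ
      rw [hzn ρ (by omega)]
      simp
    rw [show q * t * Bfun q t μ.part μ.len =
        ∑ r ∈ range μ.len, ∑ c ∈ range (μ.part r),
          q^((c:ℤ)+1) * t^((colHeight μ.part μ.len c : ℤ) - r) from by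
        unfold Bfun; exact aux_qtB hq ht hmp hml]
    rw [Finset.sum_congr rfl (fun ρ _ => hA1 ρ), e2,
      e1 (fun r c => q ^ (-(armZ ν.part r c)) * t ^ (legZ μ.part μ.len r c + 1)),
      e1 (fun r c => q^((c:ℤ)+1) * t^((colHeight μ.part μ.len c : ℤ) - r)),
      ← Finset.sum_add_distrib]
    refine Finset.sum_congr rfl fun r _ => ?_
    rw [← Finset.sum_add_distrib]
    refine Finset.sum_congr rfl fun c _ => ?_
    rw [show -(armZ ν.part r c) = (c:ℤ)+1-(ν.part r:ℤ) by unfold armZ; ring,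
      show legZ μ.part μ.len r c + 1 = (colHeight μ.part μ.len c:ℤ) - r by unfold legZ; ring]
    ring
  unfold Efun
  rw [hI, hII, hBstar, add_assoc]
  have hc : (∑ ρ ∈ range ν.len, ∑ γ ∈ range (ν.part ρ),
        q^(-(γ:ℤ)) * t^(-(ρ:ℤ)) *
          ((1-q) * ∑ c ∈ range (μ.part ρ), q^(c:ℤ) * t^((colHeight μ.part μ.len c:ℤ)))) +
      (∑ ρ ∈ range ν.len, ∑ γ ∈ range (ν.part ρ),
        q^(-(γ:ℤ)) * t^(-(ρ:ℤ)) *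
          (q^((μ.part ρ:ℤ)) * t^((ρ:ℤ)) +
            (1-t) * ∑ r ∈ range ρ, q^((μ.part r:ℤ)) * t^((r:ℤ)))) =
      (1 - (q-1)*(t-1)*Bfun q t μ.part μ.len) *
        ∑ ρ ∈ range ν.len, ∑ γ ∈ range (ν.part ρ), q^(-(γ:ℤ)) * t^(-(ρ:ℤ)) := by
    rw [← Finset.sum_add_distrib]
    conv_rhs => rw [Finset.mul_sum]
    refine Finset.sum_congr rfl fun ρ _ => ?_
    rw [← Finset.sum_add_distrib]
    conv_rhs => rw [Finset.mul_sum]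
    refine Finset.sum_congr rfl fun γ _ => ?_
    have hkey := key ρ
    unfold Ffun at hkey
    linear_combination (q^(-(γ:ℤ)) * t^(-(ρ:ℤ))) * hkey
  rw [hc]
  ring
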